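/- The sorted ℓ1 penalty R(z) = Σ_{j=1}^N β_j |z|_[j], where 0 ≤ β_1 ≤ … ≤ β_N and |z|_[1] ≥ … ≥ |z|_[N] are the magnitudes of the components of z in decreasing order, is concave on the nonnegative orthant [0,∞)^N. -/
import Mathlib

lemma sortedL1_key (N : ℕ) (β : Fin N → ℝ) (hβmono : Monotone β)
    (R : (Fin N → ℝ) → ℝ)
    (hR : ∀ z : Fin N → ℝ, ∀ σ : Equiv.Perm (Fin N),
      Antitone (fun j => |z (σ j)|) → R z = ∑ j, β j * |z (σ j)|)
    (z : Fin N → ℝ) (hz : ∀ j, 0 ≤ z j) (σ : Equiv.Perm (Fin N)) :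
    R z ≤ ∑ j, β j * z (σ j) := by
  set τ := Tuple.sort (fun j => -z j) with hτ
  have hmono : Monotone ((fun j => -z j) ∘ τ) := Tuple.monotone_sort _
  have hanti : Antitone (fun j => z (τ j)) := by
    intro a b hab
    have := hmono hab
    simpa using this
  have habs : ∀ j, |z (τ j)| = z (τ j) := fun j => abs_of_nonneg (hz _)
  have hRz : R z = ∑ j, β j * z (τ j) := by
    rw [hR z τ (by simpa only [habs] using hanti)]
    simp only [habs]
  rw [hRz]
  have hav : Antivary β (fun j => z (τ j)) := hβmono.antivary hanti
  have := hav.sum_mul_le_sum_mul_comp_perm (σ := τ⁻¹ * σ)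
  simpa using this

/-- The sorted `ℓ1` penalty `R z = ∑ j, β j * |z|_[j]`, where
`0 ≤ β 0 ≤ … ≤ β (N-1)` and `|z|_[0] ≥ … ≥ |z|_[N-1]` are the magnitudes of the
components of `z` in decreasing order, is concave on the nonnegative orthant.
Here `R` is characterized by: for any permutation `σ` arranging `|z|` in
decreasing order, `R z = ∑ j, β j * |z (σ j)|`. -/
theorem sortedL1_concave (N : ℕ) (β : Fin N → ℝ)
    (hβnonneg : ∀ j, 0 ≤ β j) (hβmono : Monotone β)
    (R : (Fin N → ℝ) → ℝ)
    (hR : ∀ z : Fin N → ℝ, ∀ σ : Equiv.Perm (Fin N),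
      Antitone (fun j => |z (σ j)|) → R z = ∑ j, β j * |z (σ j)|)
    (z z' : Fin N → ℝ) (hz : ∀ j, 0 ≤ z j) (hz' : ∀ j, 0 ≤ z' j)
    (l : ℝ) (hl0 : 0 ≤ l) (hl1 : l ≤ 1) :
    l * R z + (1 - l) * R z' ≤ R (fun j => l * z j + (1 - l) * z' j) := by
  set w : Fin N → ℝ := fun j => l * z j + (1 - l) * z' j with hw
  have hl1' : 0 ≤ 1 - l := by linarith
  have hwnn : ∀ j, 0 ≤ w j := fun j =>
    add_nonneg (mul_nonneg hl0 (hz j)) (mul_nonneg hl1' (hz' j))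
  set σ := Tuple.sort (fun j => -w j) with hσ
  have hmono : Monotone ((fun j => -w j) ∘ σ) := Tuple.monotone_sort _
  have hanti : Antitone (fun j => w (σ j)) := by
    intro a b hab
    have := hmono hab
    simpa using this
  have habs : ∀ j, |w (σ j)| = w (σ j) := fun j => abs_of_nonneg (hwnn _)
  have hRw : R w = ∑ j, β j * w (σ j) := by
    rw [hR w σ (by simpa only [habs] using hanti)]
    simp only [habs]
  have hsplit : R w = l * ∑ j, β j * z (σ j) + (1 - l) * ∑ j, β j * z' (σ j) := by
    rw [hRw, Finset.mul_sum, Finset.mul_sum, ← Finset.sum_add_distrib]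
    congr 1; ext j; simp only [hw]; ring
  have h1 : R z ≤ ∑ j, β j * z (σ j) := sortedL1_key N β hβmono R hR z hz σ
  have h2 : R z' ≤ ∑ j, β j * z' (σ j) := sortedL1_key N β hβmono R hR z' hz' σ
  calc l * R z + (1 - l) * R z'
      ≤ l * ∑ j, β j * z (σ j) + (1 - l) * ∑ j, β j * z' (σ j) := by
        gcongr
    _ = R w := hsplit.symm
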